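/- arXiv:1910.02317 — 3 statements merged into one kernel-verified Lean document; each statement's English description precedes it below -/
import Mathlib

section
/- Let Q_1, …, Q_m be positive definite real n×n matrices, let V_c(x) = min over γ in the standard simplex of xᵀ (∑_j γ_j Q_j)⁻¹ x, and define ‖x‖_c = √(V_c(x)). Then ‖·‖_c satisfies the triangle inequality: ‖x + y‖_c ≤ ‖x‖_c + ‖y‖_c for all x, y ∈ Fin n → ℝ. -/
open Matrix

/-- The composite quadratic Lyapunov function
`V_c(x) = inf_{γ ∈ Δ} xᵀ (∑ j γ_j Q_j)⁻¹ x`, where `Δ` is the standard simplex. -/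
noncomputable def compQuad {m n : ℕ} (Q : Fin m → Matrix (Fin n) (Fin n) ℝ)
    (x : Fin n → ℝ) : ℝ :=
  sInf ((fun γ : Fin m → ℝ => x ⬝ᵥ ((∑ j, γ j • Q j)⁻¹).mulVec x) '' stdSimplex ℝ (Fin m))

/-- The composite vector norm `‖x‖_c = √(V_c(x))`. -/
noncomputable def compNorm {m n : ℕ} (Q : Fin m → Matrix (Fin n) (Fin n) ℝ)
    (x : Fin n → ℝ) : ℝ :=
  Real.sqrt (compQuad Q x)

section aux

variable {m n : ℕ}

/-- A convex combination of positive definite matrices is positive definite. -/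
lemma sum_smul_posDef (Q : Fin m → Matrix (Fin n) (Fin n) ℝ) (hQ : ∀ j, (Q j).PosDef)
    {γ : Fin m → ℝ} (hγ : γ ∈ stdSimplex ℝ (Fin m)) :
    (∑ j, γ j • Q j).PosDef := by
  obtain ⟨hnn, hsum⟩ := hγ
  have hex : ∃ j ∈ Finset.univ, 0 < γ j := by
    by_contra h
    push_neg at h
    have : ∑ j, γ j = 0 := Finset.sum_eq_zero fun j hj => le_antisymm (h j hj) (hnn j)
    rw [hsum] at this; norm_num at this
  obtain ⟨j₀, _, hj₀⟩ := hex
  refine Matrix.PosDef.of_dotProduct_mulVec_pos ?_ ?_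
  · show (∑ j, γ j • Q j)ᴴ = ∑ j, γ j • Q j
    rw [Matrix.conjTranspose_sum]
    exact Finset.sum_congr rfl fun j _ => by
      rw [Matrix.conjTranspose_smul, star_trivial, (hQ j).isHermitian.eq]
  · intro x hx
    have hrw : star x ⬝ᵥ (∑ j, γ j • Q j) *ᵥ x = ∑ j, γ j * (star x ⬝ᵥ (Q j) *ᵥ x) := by
      have hmv : (∑ j, γ j • Q j) *ᵥ x = ∑ j, (γ j • Q j) *ᵥ x :=
        map_sum (Matrix.mulVec.addMonoidHomLeft x) (fun j => γ j • Q j) Finset.univ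
      rw [hmv]
      have hds : star x ⬝ᵥ ∑ j, (γ j • Q j) *ᵥ x
          = ∑ j, star x ⬝ᵥ ((γ j • Q j) *ᵥ x) := by
        simp only [dotProduct, Finset.sum_apply, Finset.mul_sum]
        exact Finset.sum_comm
      rw [hds]
      refine Finset.sum_congr rfl fun j _ => ?_
      rw [Matrix.smul_mulVec, dotProduct_smul, smul_eq_mul]
    rw [hrw]
    apply Finset.sum_pos'
    · intro j _
      exact mul_nonneg (hnn j) (le_of_lt ((hQ j).dotProduct_mulVec_pos hx))
    · exact ⟨j₀, Finset.mem_univ _, mul_pos hj₀ ((hQ j₀).dotProduct_mulVec_pos hx)⟩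

/-- Symmetry of the bilinear form of a Hermitian real matrix. -/
lemma dot_mulVec_symm {M : Matrix (Fin n) (Fin n) ℝ} (hM : M.IsHermitian)
    (z w : Fin n → ℝ) : z ⬝ᵥ M *ᵥ w = w ⬝ᵥ M *ᵥ z := by
  have hMt : Mᵀ = M := by
    have := hM.eq
    rwa [Matrix.conjTranspose_eq_transpose_of_trivial] at this
  rw [Matrix.dotProduct_mulVec, ← Matrix.mulVec_transpose, hMt, dotProduct_comm]

/-- The key inequality: `2 zᵀx - zᵀMz ≤ xᵀM⁻¹x` for positive definite `M`. -/
lemma key_ineq {M : Matrix (Fin n) (Fin n) ℝ} (hM : M.PosDef) (x z : Fin n → ℝ) :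
    2 * (z ⬝ᵥ x) - z ⬝ᵥ M *ᵥ z ≤ x ⬝ᵥ M⁻¹ *ᵥ x := by
  set w : Fin n → ℝ := M⁻¹ *ᵥ x with hw
  have hMw : M *ᵥ w = x := by
    rw [hw, Matrix.mulVec_mulVec, Matrix.mul_nonsing_inv _ hM.det_pos.ne'.isUnit, Matrix.one_mulVec]
  have hquad : 0 ≤ (z - w) ⬝ᵥ M *ᵥ (z - w) := by
    have := hM.posSemidef.dotProduct_mulVec_nonneg (z - w)
    simpa using this
  have hexp : (z - w) ⬝ᵥ M *ᵥ (z - w)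
      = z ⬝ᵥ M *ᵥ z - 2 * (z ⬝ᵥ x) + x ⬝ᵥ M⁻¹ *ᵥ x := by
    have h1 : M *ᵥ (z - w) = M *ᵥ z - x := by
      rw [Matrix.mulVec_sub, hMw]
    rw [h1, sub_dotProduct, dotProduct_sub, dotProduct_sub]
    have h2 : w ⬝ᵥ M *ᵥ z = z ⬝ᵥ x := by
      rw [dot_mulVec_symm hM.isHermitian w z, hMw]
    have h3 : w ⬝ᵥ x = x ⬝ᵥ M⁻¹ *ᵥ x := by
      rw [hw, dotProduct_comm]
    rw [h2, h3]
    ring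
  linarith [hquad, hexp ▸ hquad]

/-- Scaled key inequality. -/
lemma key_ineq_scaled {M : Matrix (Fin n) (Fin n) ℝ} (hM : M.PosDef) (x z : Fin n → ℝ)
    {t : ℝ} (ht : 0 < t) :
    2 * (z ⬝ᵥ x) - t * (z ⬝ᵥ M *ᵥ z) ≤ (x ⬝ᵥ M⁻¹ *ᵥ x) / t := by
  have h := key_ineq hM x (t • z)
  have h1 : (t • z) ⬝ᵥ x = t * (z ⬝ᵥ x) := by
    rw [smul_dotProduct]; simp
  have h2 : (t • z) ⬝ᵥ M *ᵥ (t • z) = t ^ 2 * (z ⬝ᵥ M *ᵥ z) := by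
    rw [smul_dotProduct, Matrix.mulVec_smul, dotProduct_smul]
    simp [smul_eq_mul]; ring
  rw [h1, h2] at h
  rw [le_div_iff₀ ht]
  nlinarith [h]

lemma quad_inv_nonneg {M : Matrix (Fin n) (Fin n) ℝ} (hM : M.PosDef) (x : Fin n → ℝ) :
    0 ≤ x ⬝ᵥ M⁻¹ *ᵥ x := by
  have := hM.inv.posSemidef.dotProduct_mulVec_nonneg x
  simpa using this

lemma compQuad_mem_nonneg (Q : Fin m → Matrix (Fin n) (Fin n) ℝ) (hQ : ∀ j, (Q j).PosDef)
    (x : Fin n → ℝ) :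
    ∀ v ∈ ((fun γ : Fin m → ℝ => x ⬝ᵥ ((∑ j, γ j • Q j)⁻¹).mulVec x) '' stdSimplex ℝ (Fin m)),
      0 ≤ v := by
  rintro v ⟨γ, hγ, rfl⟩
  exact quad_inv_nonneg (sum_smul_posDef Q hQ hγ) x

lemma compQuad_nonneg (Q : Fin m → Matrix (Fin n) (Fin n) ℝ) (hQ : ∀ j, (Q j).PosDef)
    (x : Fin n → ℝ) : 0 ≤ compQuad Q x :=
  Real.sInf_nonneg (compQuad_mem_nonneg Q hQ x)

lemma simplex_nonempty (hm : 0 < m) : (stdSimplex ℝ (Fin m)).Nonempty := by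
  refine ⟨fun _ => (m : ℝ)⁻¹, fun i => by positivity, ?_⟩
  rw [Finset.sum_const, Finset.card_univ, Fintype.card_fin, nsmul_eq_mul]
  field_simp

/-- Bound on the square root of a shifted value. -/
lemma sqrt_add_le {a b : ℝ} (ha : 0 ≤ a) (hb : 0 ≤ b) :
    Real.sqrt (a + b) ≤ Real.sqrt a + Real.sqrt b := by
  rw [← Real.sqrt_sq (by positivity : (0:ℝ) ≤ Real.sqrt a + Real.sqrt b)]
  apply Real.sqrt_le_sqrt
  have h1 : Real.sqrt a ^ 2 = a := Real.sq_sqrt ha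
  have h2 : Real.sqrt b ^ 2 = b := Real.sq_sqrt hb
  nlinarith [Real.sqrt_nonneg a, Real.sqrt_nonneg b]

end aux

/-- the composite vector norm satisfies the triangle inequality. -/
theorem compNorm_triangle (m n : ℕ) (hm : 0 < m)
    (Q : Fin m → Matrix (Fin n) (Fin n) ℝ) (hQ : ∀ j, (Q j).PosDef) :
    ∀ x y : Fin n → ℝ, compNorm Q (x + y) ≤ compNorm Q x + compNorm Q y := by
  intro x y
  apply le_of_forall_pos_le_add
  intro ε hε
  set δ : ℝ := (ε / 2) ^ 2 / 2 with hδdef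
  have hδ : 0 < δ := by positivity
  -- set for x
  have hne : ∀ z : Fin n → ℝ,
      ((fun γ : Fin m → ℝ => z ⬝ᵥ ((∑ j, γ j • Q j)⁻¹).mulVec z) '' stdSimplex ℝ (Fin m)).Nonempty :=
    fun z => (simplex_nonempty hm).image _
  -- choose near-optimal γ for x
  obtain ⟨vx, hvxmem, hvxlt⟩ := Real.lt_sInf_add_pos (hne x) hδ
  obtain ⟨γ, hγ, hγeq⟩ := hvxmem
  obtain ⟨vy, hvymem, hvylt⟩ := Real.lt_sInf_add_pos (hne y) hδ
  obtain ⟨θ, hθ, hθeq⟩ := hvymem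
  set A : Matrix (Fin n) (Fin n) ℝ := ∑ j, γ j • Q j with hA
  set B : Matrix (Fin n) (Fin n) ℝ := ∑ j, θ j • Q j with hB
  have hAp : A.PosDef := sum_smul_posDef Q hQ hγ
  have hBp : B.PosDef := sum_smul_posDef Q hQ hθ
  have hvx0 : 0 ≤ vx := hγeq ▸ quad_inv_nonneg hAp x
  have hvy0 : 0 ≤ vy := hθeq ▸ quad_inv_nonneg hBp y
  set a : ℝ := Real.sqrt (vx + δ) with hadef
  set b : ℝ := Real.sqrt (vy + δ) with hbdef
  have ha : 0 < a := Real.sqrt_pos.mpr (by linarith)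
  have hb : 0 < b := Real.sqrt_pos.mpr (by linarith)
  have hab : 0 < a + b := by linarith
  have ha2 : a ^ 2 = vx + δ := Real.sq_sqrt (by linarith)
  have hb2 : b ^ 2 = vy + δ := Real.sq_sqrt (by linarith)
  have hvxa : vx ≤ a ^ 2 := by rw [ha2]; linarith
  have hvyb : vy ≤ b ^ 2 := by rw [hb2]; linarith
  -- a ≤ compNorm Q x + ε/2
  have hsq2δ : Real.sqrt (2 * δ) = ε / 2 := by
    rw [hδdef]
    rw [show 2 * ((ε / 2) ^ 2 / 2) = (ε / 2) ^ 2 by ring]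
    exact Real.sqrt_sq (by linarith)
  have haN : a ≤ compNorm Q x + ε / 2 := by
    have h1 : vx + δ ≤ compQuad Q x + 2 * δ := by
      have : vx < compQuad Q x + δ := hvxlt
      linarith
    calc a ≤ Real.sqrt (compQuad Q x + 2 * δ) := Real.sqrt_le_sqrt h1
      _ ≤ Real.sqrt (compQuad Q x) + Real.sqrt (2 * δ) :=
          sqrt_add_le (compQuad_nonneg Q hQ x) (by linarith)
      _ = compNorm Q x + ε / 2 := by rw [hsq2δ, compNorm]
  have hbN : b ≤ compNorm Q y + ε / 2 := by
    have h1 : vy + δ ≤ compQuad Q y + 2 * δ := by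
      have : vy < compQuad Q y + δ := hvylt
      linarith
    calc b ≤ Real.sqrt (compQuad Q y + 2 * δ) := Real.sqrt_le_sqrt h1
      _ ≤ Real.sqrt (compQuad Q y) + Real.sqrt (2 * δ) :=
          sqrt_add_le (compQuad_nonneg Q hQ y) (by linarith)
      _ = compNorm Q y + ε / 2 := by rw [hsq2δ, compNorm]
  -- the mixed coefficient vector
  set lam : ℝ := a / (a + b) with hlam
  have hlam0 : 0 < lam := by positivity
  have hlam1 : 0 < 1 - lam := by
    rw [hlam]
    have : a / (a + b) < 1 := (div_lt_one hab).mpr (by linarith)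
    linarith
  have h1lam : 1 - lam = b / (a + b) := by
    rw [hlam]; field_simp; ring
  set μ : Fin m → ℝ := fun j => lam * γ j + (1 - lam) * θ j with hμ
  have hμmem : μ ∈ stdSimplex ℝ (Fin m) := by
    constructor
    · intro i
      have := hγ.1 i
      have := hθ.1 i
      have h1 := hlam0.le
      have h2 := hlam1.le
      positivity
    · rw [hμ]
      simp only []
      rw [Finset.sum_add_distrib, ← Finset.mul_sum, ← Finset.mul_sum, hγ.2, hθ.2]
      ring
  set M : Matrix (Fin n) (Fin n) ℝ := ∑ j, μ j • Q j with hM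
  have hMp : M.PosDef := sum_smul_posDef Q hQ hμmem
  have hMsplit : M = lam • A + (1 - lam) • B := by
    rw [hM, hA, hB, Finset.smul_sum, Finset.smul_sum, ← Finset.sum_add_distrib]
    refine Finset.sum_congr rfl fun j _ => ?_
    show (lam * γ j + (1 - lam) * θ j) • Q j = lam • γ j • Q j + (1 - lam) • θ j • Q j
    rw [add_smul, smul_smul, smul_smul]
  -- the key estimate
  set w : Fin n → ℝ := M⁻¹ *ᵥ (x + y) with hw
  have hMw : M *ᵥ w = x + y := by
    rw [hw, Matrix.mulVec_mulVec, Matrix.mul_nonsing_inv _ hMp.det_pos.ne'.isUnit, Matrix.one_mulVec]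
  have hq : (x + y) ⬝ᵥ M⁻¹ *ᵥ (x + y) = 2 * (w ⬝ᵥ (x + y)) - w ⬝ᵥ M *ᵥ w := by
    rw [hMw, ← hw, dotProduct_comm]
    ring
  have hwM : w ⬝ᵥ M *ᵥ w = lam * (w ⬝ᵥ A *ᵥ w) + (1 - lam) * (w ⬝ᵥ B *ᵥ w) := by
    rw [hMsplit, Matrix.add_mulVec, dotProduct_add, Matrix.smul_mulVec,
      Matrix.smul_mulVec, dotProduct_smul, dotProduct_smul]
    simp [smul_eq_mul]
  have hbound : (x + y) ⬝ᵥ M⁻¹ *ᵥ (x + y) ≤ (a + b) ^ 2 := by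
    have hx1 : 2 * (w ⬝ᵥ x) - lam * (w ⬝ᵥ A *ᵥ w) ≤ a * (a + b) := by
      have h := key_ineq_scaled hAp x w hlam0
      have : (x ⬝ᵥ A⁻¹ *ᵥ x) / lam ≤ a * (a + b) := by
        rw [div_le_iff₀ hlam0, hlam]
        have hval : x ⬝ᵥ A⁻¹ *ᵥ x = vx := hγeq
        rw [hval]
        rw [show a * (a + b) * (a / (a + b)) = a ^ 2 * ((a+b) / (a+b)) by ring]
        rw [div_self hab.ne']
        rw [mul_one]
        exact hvxa
      linarith
    have hy1 : 2 * (w ⬝ᵥ y) - (1 - lam) * (w ⬝ᵥ B *ᵥ w) ≤ b * (a + b) := by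
      have h := key_ineq_scaled hBp y w hlam1
      have : (y ⬝ᵥ B⁻¹ *ᵥ y) / (1 - lam) ≤ b * (a + b) := by
        rw [div_le_iff₀ hlam1, h1lam]
        have hval : y ⬝ᵥ B⁻¹ *ᵥ y = vy := hθeq
        rw [hval]
        rw [show b * (a + b) * (b / (a + b)) = b ^ 2 * ((a+b) / (a+b)) by ring]
        rw [div_self hab.ne']
        rw [mul_one]
        exact hvyb
      linarith
    have hdotadd : w ⬝ᵥ (x + y) = w ⬝ᵥ x + w ⬝ᵥ y := dotProduct_add w x y
    rw [hq, hwM, hdotadd]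
    nlinarith
  -- conclude
  have hle : compQuad Q (x + y) ≤ (a + b) ^ 2 := by
    have hmem : (x + y) ⬝ᵥ M⁻¹ *ᵥ (x + y) ∈
        ((fun γ : Fin m → ℝ => (x+y) ⬝ᵥ ((∑ j, γ j • Q j)⁻¹).mulVec (x+y)) '' stdSimplex ℝ (Fin m)) :=
      ⟨μ, hμmem, rfl⟩
    have hbdd : BddBelow ((fun γ : Fin m → ℝ =>
        (x+y) ⬝ᵥ ((∑ j, γ j • Q j)⁻¹).mulVec (x+y)) '' stdSimplex ℝ (Fin m)) :=
      ⟨0, compQuad_mem_nonneg Q hQ (x + y)⟩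
    calc compQuad Q (x + y) ≤ (x + y) ⬝ᵥ M⁻¹ *ᵥ (x + y) := csInf_le hbdd hmem
      _ ≤ (a + b) ^ 2 := hbound
  have : compNorm Q (x + y) ≤ a + b := by
    rw [compNorm, ← Real.sqrt_sq hab.le]
    exact Real.sqrt_le_sqrt hle
  linarith
end

section
/- Let Q be a positive definite real n×n matrix, let α₀ > 0, and let A_1, …, A_N be real n×n matrices such that A_i Q + Q A_iᵀ + 2α₀ Q is negative semidefinite for each i. Let A : ℝ → Matrix (Fin n) (Fin n) ℝ be such that A(t) lies in the convex hull of {A_1, …, A_N} for every t, and let x : ℝ → (Fin n → ℝ) be differentiable with x'(t) = A(t) x(t) for all t. Then ‖x(t)‖_q ≤ e^{−α₀ t} ‖x(0)‖_q for all t ≥ 0; in particular, if ‖x(0)‖_q ≤ 1 then ‖x(t)‖_q ≤ 1 for all t ≥ 0, so the unit ball Ω_q = {x : ‖x‖_q ≤ 1} is forward invariant for the polytopic linear differential inclusion. -/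
open Matrix

/-- The vector norm `‖x‖_q = √(xᵀ Q⁻¹ x)` associated to a positive definite matrix `Q`. -/
noncomputable def quadNorm {n : ℕ} (Q : Matrix (Fin n) (Fin n) ℝ) (x : Fin n → ℝ) : ℝ :=
  Real.sqrt (x ⬝ᵥ Q⁻¹.mulVec x)

/-- Derivative of the quadratic form along a differentiable curve. -/
lemma hasDerivAt_quadForm {n : ℕ} (P : Matrix (Fin n) (Fin n) ℝ)
    (x : ℝ → Fin n → ℝ) (v : Fin n → ℝ) (t : ℝ) (hx : HasDerivAt x v t) :
    HasDerivAt (fun s => x s ⬝ᵥ P.mulVec (x s))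
      (v ⬝ᵥ P.mulVec (x t) + x t ⬝ᵥ P.mulVec v) t := by
  have hxi : ∀ i, HasDerivAt (fun s => x s i) (v i) t := fun i => hasDerivAt_pi.1 hx i
  have h : HasDerivAt (fun s => ∑ i, ∑ j, x s i * (P i j * x s j))
      (∑ i, ∑ j, (v i * (P i j * x t j) + x t i * (P i j * v j))) t := by
    refine HasDerivAt.fun_sum fun i _ => HasDerivAt.fun_sum fun j _ => ?_
    exact (hxi i).mul ((hxi j).const_mul (P i j))
  convert h using 1 <;>
    simp [dotProduct, mulVec, Finset.mul_sum, Finset.sum_add_distrib, mul_add, mul_assoc,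
      mul_comm, mul_left_comm]

/-- if all vertex matrices of a polytopic linear differential inclusion satisfy
`A_i Q + Q A_iᵀ + 2α₀ Q ⪯ 0`, then along any trajectory `x' = A(t) x` with
`A(t) ∈ Co{A_1, …, A_N}` we have `‖x(t)‖_q ≤ e^{-α₀ t} ‖x(0)‖_q`; in particular the
unit ball of `‖·‖_q` is forward invariant. -/
theorem pldi_quad_invariance (n N : ℕ) (hN : 0 < N)
    (Q : Matrix (Fin n) (Fin n) ℝ) (hQ : Q.PosDef)
    (α₀ : ℝ) (hα₀ : 0 < α₀)
    (As : Fin N → Matrix (Fin n) (Fin n) ℝ)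
    (hLMI : ∀ i : Fin N, (-(As i * Q + Q * (As i)ᵀ + (2 * α₀) • Q)).PosSemidef)
    (A : ℝ → Matrix (Fin n) (Fin n) ℝ)
    (hA : ∀ t : ℝ, A t ∈ convexHull ℝ (Set.range As))
    (x : ℝ → (Fin n → ℝ))
    (hx : ∀ t : ℝ, HasDerivAt x ((A t).mulVec (x t)) t) :
    (∀ t : ℝ, 0 ≤ t → quadNorm Q (x t) ≤ Real.exp (-α₀ * t) * quadNorm Q (x 0)) ∧
    (quadNorm Q (x 0) ≤ 1 → ∀ t : ℝ, 0 ≤ t → quadNorm Q (x t) ≤ 1) := by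
  classical
  set P := Q⁻¹ with hPdef
  have hP : P.PosDef := hQ.inv
  have hPsym : Pᵀ = P := hP.1
  have hQunit : IsUnit Q.det := hQ.det_pos.ne'.isUnit
  have hPQ : P * Q = 1 := Q.nonsing_inv_mul hQunit
  have hQP : Q * P = 1 := Q.mul_nonsing_inv hQunit
  -- transformed LMI: for each vertex, -(P A + Aᵀ P + 2α₀ P) is PSD
  have hLMI' : ∀ i : Fin N,
      (-(P * As i + (As i)ᵀ * P + (2 * α₀) • P)).PosSemidef := by
    intro i
    have h1 := (hLMI i).mul_mul_conjTranspose_same P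
    have hPH : Pᴴ = P := by
      rw [conjTranspose_eq_transpose_of_trivial, hPsym]
    rw [hPH] at h1
    have key : P * (As i * Q + Q * (As i)ᵀ + (2 * α₀) • Q) * P
        = P * As i + (As i)ᵀ * P + (2 * α₀) • P := by
      simp only [Matrix.mul_add, Matrix.add_mul, Matrix.mul_smul, Matrix.smul_mul,
        Matrix.mul_assoc]
      rw [hQP]
      rw [← Matrix.mul_assoc P Q ((As i)ᵀ * P), hPQ]
      simp only [Matrix.mul_one, Matrix.one_mul]
    have h2 : P * -(As i * Q + Q * (As i)ᵀ + (2 * α₀) • Q) * P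
        = -(P * As i + (As i)ᵀ * P + (2 * α₀) • P) := by
      rw [Matrix.mul_neg, Matrix.neg_mul, key]
    rwa [h2] at h1
  -- pointwise quadratic inequality for every matrix in the hull
  have hull : ∀ t : ℝ, ∀ y : Fin n → ℝ,
      y ⬝ᵥ (P * A t + (A t)ᵀ * P).mulVec y ≤ -(2 * α₀) * (y ⬝ᵥ P.mulVec y) := by
    intro t y
    set S : Set (Matrix (Fin n) (Fin n) ℝ) :=
      {B | y ⬝ᵥ (P * B + Bᵀ * P).mulVec y ≤ -(2 * α₀) * (y ⬝ᵥ P.mulVec y)} with hS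
    have hconv : Convex ℝ S := by
      intro B hB C hC a b ha hb hab
      simp only [hS, Set.mem_setOf_eq] at hB hC ⊢
      have key : y ⬝ᵥ (P * (a • B + b • C) + (a • B + b • C)ᵀ * P).mulVec y
          = a * (y ⬝ᵥ (P * B + Bᵀ * P).mulVec y) + b * (y ⬝ᵥ (P * C + Cᵀ * P).mulVec y) := by
        simp [Matrix.mul_add, Matrix.add_mul, Matrix.mul_smul, Matrix.smul_mul,
          transpose_add, transpose_smul, add_mulVec, smul_mulVec, dotProduct_add,
          dotProduct_smul, smul_eq_mul]
        ring
      rw [key]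
      calc a * (y ⬝ᵥ (P * B + Bᵀ * P).mulVec y) + b * (y ⬝ᵥ (P * C + Cᵀ * P).mulVec y)
          ≤ a * (-(2 * α₀) * (y ⬝ᵥ P.mulVec y)) + b * (-(2 * α₀) * (y ⬝ᵥ P.mulVec y)) := by
            gcongr <;> assumption
        _ = -(2 * α₀) * (y ⬝ᵥ P.mulVec y) := by rw [← add_mul, hab]; ring
    have hmem : Set.range As ⊆ S := by
      rintro _ ⟨i, rfl⟩
      have h2 := (hLMI' i).dotProduct_mulVec_nonneg y
      simp only [star_trivial, neg_mulVec, dotProduct_neg, add_mulVec, dotProduct_add,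
        smul_mulVec, dotProduct_smul, smul_eq_mul] at h2
      simp only [hS, Set.mem_setOf_eq, add_mulVec, dotProduct_add]
      linarith
    exact convexHull_min hmem hconv (hA t)
  -- V and its derivative
  set V : ℝ → ℝ := fun t => x t ⬝ᵥ P.mulVec (x t) with hV
  have hVderiv : ∀ t, HasDerivAt V
      ((A t).mulVec (x t) ⬝ᵥ P.mulVec (x t) + x t ⬝ᵥ P.mulVec ((A t).mulVec (x t))) t :=
    fun t => hasDerivAt_quadForm P x _ t (hx t)
  have hVbound : ∀ t, (A t).mulVec (x t) ⬝ᵥ P.mulVec (x t) + x t ⬝ᵥ P.mulVec ((A t).mulVec (x t))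
      ≤ -(2 * α₀) * V t := by
    intro t
    have h := hull t (x t)
    have e1 : (A t).mulVec (x t) ⬝ᵥ P.mulVec (x t) = x t ⬝ᵥ ((A t)ᵀ * P).mulVec (x t) := by
      rw [← mulVec_mulVec, ← Matrix.vecMul_transpose, ← Matrix.dotProduct_mulVec]
    have e2 : x t ⬝ᵥ P.mulVec ((A t).mulVec (x t)) = x t ⬝ᵥ (P * A t).mulVec (x t) := by
      rw [mulVec_mulVec]
    rw [e1, e2]
    simp only [add_mulVec, dotProduct_add] at h
    linarith
  -- g(t) = exp(2α₀ t) V(t) is antitone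
  set g : ℝ → ℝ := fun t => Real.exp (2 * α₀ * t) * V t with hg
  have hgderiv : ∀ t, HasDerivAt g
      (Real.exp (2 * α₀ * t) * (2 * α₀) * V t + Real.exp (2 * α₀ * t) *
        ((A t).mulVec (x t) ⬝ᵥ P.mulVec (x t) + x t ⬝ᵥ P.mulVec ((A t).mulVec (x t)))) t := by
    intro t
    have hexp : HasDerivAt (fun s => Real.exp (2 * α₀ * s))
        (Real.exp (2 * α₀ * t) * (2 * α₀)) t := by
      have := ((hasDerivAt_id t).const_mul (2 * α₀)).exp
      simpa [mul_comm] using this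
    exact hexp.mul (hVderiv t)
  have hganti : Antitone g := by
    apply antitone_of_deriv_nonpos
    · exact fun t => (hgderiv t).differentiableAt
    · intro t
      rw [(hgderiv t).deriv]
      have h1 := hVbound t
      have h2 : Real.exp (2 * α₀ * t) * ((A t).mulVec (x t) ⬝ᵥ P.mulVec (x t) +
          x t ⬝ᵥ P.mulVec ((A t).mulVec (x t))) ≤ Real.exp (2 * α₀ * t) * (-(2 * α₀) * V t) :=
        mul_le_mul_of_nonneg_left h1 (Real.exp_pos _).le
      nlinarith [Real.exp_pos (2 * α₀ * t)]
  have hVnonneg : ∀ t, 0 ≤ V t := fun t => by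
    simpa using hP.posSemidef.dotProduct_mulVec_nonneg (x t)
  have hVle : ∀ t : ℝ, 0 ≤ t → V t ≤ Real.exp (-(2 * α₀) * t) * V 0 := by
    intro t ht
    have hgt : Real.exp (2 * α₀ * t) * V t ≤ V 0 := by
      have := hganti ht
      simpa [hg] using this
    have e : V t = Real.exp (-(2 * α₀) * t) * (Real.exp (2 * α₀ * t) * V t) := by
      rw [← mul_assoc, ← Real.exp_add]
      norm_num
    rw [e]
    exact mul_le_mul_of_nonneg_left hgt (Real.exp_pos _).le
  have hquad : ∀ t : ℝ, 0 ≤ t → quadNorm Q (x t) ≤ Real.exp (-α₀ * t) * quadNorm Q (x 0) := by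
    intro t ht
    have h := hVle t ht
    have hs : Real.sqrt (V t) ≤ Real.sqrt (Real.exp (-(2 * α₀) * t) * V 0) :=
      Real.sqrt_le_sqrt h
    have hsplit : Real.sqrt (Real.exp (-(2 * α₀) * t) * V 0)
        = Real.exp (-α₀ * t) * Real.sqrt (V 0) := by
      rw [Real.sqrt_mul (Real.exp_nonneg _),
        show -(2 * α₀) * t = (-α₀ * t) + (-α₀ * t) by ring, Real.exp_add,
        Real.sqrt_mul_self (Real.exp_nonneg _)]
    simpa [quadNorm, ← hPdef, hsplit] using hs.trans_eq hsplit |>.trans_eq rfl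
  refine ⟨hquad, fun h0 t ht => ?_⟩
  have h := hquad t ht
  have hexp1 : Real.exp (-α₀ * t) ≤ 1 := by
    rw [Real.exp_le_one_iff]
    nlinarith
  have hnn : 0 ≤ quadNorm Q (x 0) := Real.sqrt_nonneg _
  calc quadNorm Q (x t) ≤ Real.exp (-α₀ * t) * quadNorm Q (x 0) := h
    _ ≤ 1 * 1 := by apply mul_le_mul hexp1 h0 hnn; norm_num
    _ = 1 := by norm_num
end

section
/- Let Q_1, …, Q_m be positive definite real n×n matrices and let f ∈ Fin n → ℝ satisfy f Q_j fᵀ ≤ 1 (i.e., f ⬝ (Q_j f) ≤ 1) for every j = 1, …, m. Then every x in the composite unit ball Ω_c = {x : V_c(x) ≤ 1}, where V_c(x) = min over γ in the standard simplex of xᵀ (∑_j γ_j Q_j)⁻¹ x, satisfies |f · x| ≤ 1. -/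
open Matrix

lemma smul_posSemidef {n : ℕ} {Q : Matrix (Fin n) (Fin n) ℝ} (hQ : Q.PosSemidef)
    {c : ℝ} (hc : 0 ≤ c) : (c • Q).PosSemidef := by
  refine posSemidef_iff_dotProduct_mulVec.mpr ⟨?_, fun x => ?_⟩
  · unfold Matrix.IsHermitian
    rw [conjTranspose_smul, hQ.1.eq, star_trivial]
  · have h0 := hQ.dotProduct_mulVec_nonneg x
    simp only [smul_mulVec, dotProduct_smul, smul_eq_mul, RCLike.star_def] at *
    simpa using mul_nonneg hc h0

lemma smul_posDef {n : ℕ} {Q : Matrix (Fin n) (Fin n) ℝ} (hQ : Q.PosDef)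
    {c : ℝ} (hc : 0 < c) : (c • Q).PosDef := by
  refine posDef_iff_dotProduct_mulVec.mpr ⟨(smul_posSemidef hQ.posSemidef hc.le).1, fun x hx => ?_⟩
  have h0 := hQ.dotProduct_mulVec_pos hx
  simp only [smul_mulVec, dotProduct_smul, smul_eq_mul] at *
  simpa using mul_pos hc h0

lemma sum_posDef {m n : ℕ} (Q : Fin m → Matrix (Fin n) (Fin n) ℝ) (hQ : ∀ j, (Q j).PosDef)
    (γ : Fin m → ℝ) (hγ : γ ∈ stdSimplex ℝ (Fin m)) :
    (∑ j, γ j • Q j).PosDef := by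
  obtain ⟨hnn, hsum⟩ := hγ
  have : ∃ j₀, 0 < γ j₀ := by
    by_contra h
    push_neg at h
    have : ∑ j, γ j = 0 := Finset.sum_eq_zero fun j _ => le_antisymm (h j) (hnn j)
    rw [hsum] at this; norm_num at this
  obtain ⟨j₀, hj₀⟩ := this
  rw [← Finset.add_sum_erase _ _ (Finset.mem_univ j₀)]
  refine Matrix.PosDef.add_posSemidef (smul_posDef (hQ j₀) hj₀) ?_
  refine Finset.sum_induction _ _ (fun a b ha hb => ha.add hb) Matrix.PosSemidef.zero ?_
  exact fun j _ => smul_posSemidef (hQ j).posSemidef (hnn j)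

/-- Cauchy–Schwarz for a positive definite matrix. -/
lemma cs_posDef {n : ℕ} {P : Matrix (Fin n) (Fin n) ℝ} (hP : P.PosDef) (f x : Fin n → ℝ) :
    (f ⬝ᵥ x) ^ 2 ≤ (f ⬝ᵥ P.mulVec f) * (x ⬝ᵥ P⁻¹.mulVec x) := by
  set y := P⁻¹.mulVec x with hy
  have hinv : P * P⁻¹ = 1 := Matrix.mul_nonsing_inv P hP.det_pos.ne'.isUnit
  have hx : P.mulVec y = x := by
    rw [hy, mulVec_mulVec, hinv, one_mulVec]
  have ht : Pᵀ = P := by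
    ext i j
    rw [Matrix.transpose_apply]
    simpa using congrFun (congrFun hP.1.eq i) j
  have hsym : ∀ u v : Fin n → ℝ, u ⬝ᵥ P.mulVec v = v ⬝ᵥ P.mulVec u := by
    intro u v
    rw [dotProduct_mulVec, ← mulVec_transpose, ht, dotProduct_comm]
  have hc : x ⬝ᵥ P⁻¹.mulVec x = y ⬝ᵥ P.mulVec y := by
    rw [← hy, hx, dotProduct_comm]
  have hb : f ⬝ᵥ x = f ⬝ᵥ P.mulVec y := by rw [hx]
  have hquad : ∀ t : ℝ, 0 ≤ (f ⬝ᵥ P.mulVec f) * (t * t) + (2 * (f ⬝ᵥ x)) * t +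
      x ⬝ᵥ P⁻¹.mulVec x := by
    intro t
    have h0 := hP.posSemidef.dotProduct_mulVec_nonneg (t • f + y)
    simp only [RCLike.star_def, starRingEnd_apply, star_trivial] at h0
    have h0' : (0:ℝ) ≤ (t • f + y) ⬝ᵥ P.mulVec (t • f + y) := by simpa using h0
    have hexp : (t • f + y) ⬝ᵥ P.mulVec (t • f + y)
        = (f ⬝ᵥ P.mulVec f) * (t * t) + (2 * (f ⬝ᵥ x)) * t + x ⬝ᵥ P⁻¹.mulVec x := by
      rw [mulVec_add, dotProduct_add, add_dotProduct, add_dotProduct,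
        mulVec_smul, smul_dotProduct, smul_dotProduct, dotProduct_smul, dotProduct_smul,
        hsym y f, hc, ← hb]
      simp only [smul_eq_mul]
      ring
    linarith [hexp ▸ h0']
  have hd := discrim_le_zero hquad
  rw [discrim] at hd
  nlinarith [hd]

/-- if `f Q_j fᵀ ≤ 1` for every `j`, then every `x` in the composite unit
ball `{x | V_c(x) ≤ 1}` satisfies the state constraint `|f · x| ≤ 1`. -/
theorem comp_unit_ball_state_constraint (m n : ℕ) (hm : 0 < m)
    (Q : Fin m → Matrix (Fin n) (Fin n) ℝ) (hQ : ∀ j, (Q j).PosDef)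
    (f : Fin n → ℝ) (hf : ∀ j : Fin m, f ⬝ᵥ (Q j).mulVec f ≤ 1) :
    ∀ x : Fin n → ℝ, compQuad Q x ≤ 1 → |f ⬝ᵥ x| ≤ 1 := by
  intro x hx
  set S := ((fun γ : Fin m → ℝ => x ⬝ᵥ ((∑ j, γ j • Q j)⁻¹).mulVec x) '' stdSimplex ℝ (Fin m))
    with hS
  have hne : S.Nonempty := by
    refine ⟨_, ⟨fun j => if j = ⟨0, hm⟩ then 1 else 0, ?_, rfl⟩⟩
    constructor
    · intro j; by_cases h : j = ⟨0, hm⟩ <;> simp [h]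
    · simp
  have hbdd : BddBelow S := by
    refine ⟨0, fun y hy => ?_⟩
    obtain ⟨γ, hγ, rfl⟩ := hy
    have hP := (sum_posDef Q hQ γ hγ).inv
    have := hP.posSemidef.dotProduct_mulVec_nonneg x
    simpa using this
  rw [abs_le_one_iff_mul_self_le_one]
  have key : ∀ ε : ℝ, 0 < ε → (f ⬝ᵥ x) * (f ⬝ᵥ x) ≤ 1 + ε := by
    intro ε hε
    have hlt : sInf S < 1 + ε := lt_of_le_of_lt hx (by linarith)
    obtain ⟨c, hcS, hc⟩ := (csInf_lt_iff hbdd hne).mp hlt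
    obtain ⟨γ, hγ, rfl⟩ := hcS
    have hPdef := sum_posDef Q hQ γ hγ
    have hcs := cs_posDef hPdef f x
    have ha1 : f ⬝ᵥ (∑ j, γ j • Q j).mulVec f ≤ 1 := by
      have : f ⬝ᵥ (∑ j, γ j • Q j).mulVec f = ∑ j, γ j * (f ⬝ᵥ (Q j).mulVec f) := by
        have hsum : (∑ j, γ j • Q j).mulVec f = ∑ j, (γ j • Q j).mulVec f :=
          map_sum (Matrix.mulVec.addMonoidHomLeft f) _ _
        rw [hsum]
        simp only [smul_mulVec, dotProduct, Finset.sum_apply, Pi.smul_apply,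
          smul_eq_mul, Finset.mul_sum]
        rw [Finset.sum_comm]
        exact Finset.sum_congr rfl fun j _ => Finset.sum_congr rfl fun i _ => by ring
      rw [this, ← hγ.2]
      refine Finset.sum_le_sum fun j _ => ?_
      calc γ j * (f ⬝ᵥ (Q j).mulVec f) ≤ γ j * 1 := by
            refine mul_le_mul_of_nonneg_left (hf j) (hγ.1 j)
        _ = γ j := mul_one _
    have ha0 : 0 ≤ f ⬝ᵥ (∑ j, γ j • Q j).mulVec f := by
      simpa using hPdef.posSemidef.dotProduct_mulVec_nonneg f
    have hc0 : 0 ≤ x ⬝ᵥ ((∑ j, γ j • Q j)⁻¹).mulVec x := by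
      simpa using hPdef.inv.posSemidef.dotProduct_mulVec_nonneg x
    nlinarith [hcs]
  exact le_of_forall_pos_le_add key
end
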